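/- arXiv:math/9909032 — 3 statements merged into one kernel-verified Lean document; each statement's English description precedes it below -/
import Mathlib

section
/- Let n ≥ 2, δ > 0, and let T and T' be the closed δ-neighbourhoods in ℝⁿ of the line segments l(x,v) = {(x+vt, t) : t ∈ [0,1]} and l(x',v') respectively, where x,v,x',v' ∈ ℝ^{n-1} with |v|,|v'| ≤ 1. If |v - v'| ≥ τ > 0, then the Lebesgue measure of T ∩ T' is at most C(n) δⁿ / τ for some constant C(n) depending only on n. -/
open Metric MeasureTheory

/-- The line segment `l(x,v) = {(x+tv, t) : t ∈ [0,1]}` in `ℝ^{n-1} × ℝ`. -/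
def seg (n : ℕ) (x v : EuclideanSpace ℝ (Fin n)) :
    Set ((EuclideanSpace ℝ (Fin n)) × ℝ) :=
  {p | ∃ t ∈ Set.Icc (0 : ℝ) 1, p = (x + t • v, t)}

lemma seg_eq_image (n : ℕ) (x v : EuclideanSpace ℝ (Fin n)) :
    seg n x v = (fun t : ℝ => (x + t • v, t)) '' Set.Icc 0 1 := by
  ext p
  constructor
  · rintro ⟨t, ht, h⟩; exact ⟨t, ht, h.symm⟩
  · rintro ⟨t, ht, h⟩; exact ⟨t, ht, h.symm⟩

lemma exists_near {n : ℕ} {δ : ℝ} (hδ : 0 ≤ δ) (x v : EuclideanSpace ℝ (Fin n))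
    (p : EuclideanSpace ℝ (Fin n) × ℝ) (hp : p ∈ cthickening δ (seg n x v)) :
    ∃ t ∈ Set.Icc (0:ℝ) 1, ‖p.1 - (x + t • v)‖ ≤ δ ∧ |p.2 - t| ≤ δ := by
  have hcomp : IsCompact (seg n x v) := by
    rw [seg_eq_image]
    exact isCompact_Icc.image (by fun_prop)
  have hne : (seg n x v).Nonempty := ⟨(x + (0:ℝ) • v, 0), 0, by simp, rfl⟩
  obtain ⟨q, hq, hq2⟩ := hcomp.exists_infEdist_eq_edist hne p
  have h1 : infEDist p (seg n x v) ≤ ENNReal.ofReal δ := hp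
  rw [hq2] at h1
  have hd : dist p q ≤ δ := by
    rwa [edist_dist, ENNReal.ofReal_le_ofReal_iff hδ] at h1
  obtain ⟨t, ht, rfl⟩ := hq
  have h1' : dist p.1 (x + t • v) ≤ δ :=
    le_trans (by rw [Prod.dist_eq]; exact le_max_left _ _) hd
  have h2' : dist p.2 t ≤ δ :=
    le_trans (by rw [Prod.dist_eq]; exact le_max_right _ _) hd
  exact ⟨t, ht, by rwa [dist_eq_norm] at h1', by rwa [Real.dist_eq] at h2'⟩

/-- If two tubes (δ-neighbourhoods of segments `l(x,v)`, `l(x',v')` with `|v|,|v'| ≤ 1`)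
have directions separated by `τ`, then the measure of their intersection is at most
`C(n) δ^n / τ`. -/
theorem stmt2 (n : ℕ) (hn : 2 ≤ n) :
    ∃ C : ℝ, 0 < C ∧ ∀ (δ τ : ℝ), 0 < δ → 0 < τ →
      ∀ x v x' v' : EuclideanSpace ℝ (Fin (n - 1)),
        ‖v‖ ≤ 1 → ‖v'‖ ≤ 1 → τ ≤ ‖v - v'‖ →
        volume (cthickening δ (seg (n - 1) x v) ∩ cthickening δ (seg (n - 1) x' v'))
          ≤ ENNReal.ofReal (C * δ ^ n / τ) := by
  set E := EuclideanSpace ℝ (Fin (n-1)) with hE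
  set B := volume (ball (0 : E) 1) with hBdef
  have hBfin : B ≠ ⊤ := measure_ball_lt_top.ne
  have hBpos : 0 < B.toReal :=
    ENNReal.toReal_pos (measure_ball_pos volume (0 : E) one_pos).ne' hBfin
  refine ⟨24 * 2^(n-1) * B.toReal, by positivity, ?_⟩
  intro δ τ hδ hτ x v x' v' hv hv' hsep
  set T := cthickening δ (seg (n-1) x v) with hT
  set T' := cthickening δ (seg (n-1) x' v') with hT'
  rcases Set.eq_empty_or_nonempty (T ∩ T') with he | ⟨p₀, hp₀⟩
  · rw [he]; simp
  have hδ0 : (0:ℝ) ≤ δ := hδ.le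
  have hτ2 : τ ≤ 2 := by
    refine hsep.trans ((norm_sub_le _ _).trans ?_); linarith
  -- key middle estimate
  have key : ∀ p ∈ T ∩ T', ∀ t : ℝ, ‖p.1 - (x + t • v)‖ ≤ δ → |p.2 - t| ≤ δ →
      ‖(x - x') + t • (v - v')‖ ≤ 4*δ := by
    intro p hp t h1 h2
    obtain ⟨t', ht', h1', h2'⟩ := exists_near hδ0 x' v' p hp.2
    have htt' : |t - t'| ≤ 2*δ := by
      have := abs_sub_le t p.2 t'
      rw [abs_sub_comm t p.2] at this
      linarith
    have heq : (x - x') + t • (v - v') =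
        (p.1 - (x' + t' • v')) - (p.1 - (x + t • v)) - (t - t') • v' := by
      module
    rw [heq]
    have hn1 : ‖(p.1 - (x' + t' • v')) - (p.1 - (x + t • v)) - (t - t') • v'‖ ≤
        ‖(p.1 - (x' + t' • v')) - (p.1 - (x + t • v))‖ + ‖(t - t') • v'‖ := norm_sub_le _ _
    have hn2 : ‖(p.1 - (x' + t' • v')) - (p.1 - (x + t • v))‖ ≤
        ‖p.1 - (x' + t' • v')‖ + ‖p.1 - (x + t • v)‖ := norm_sub_le _ _
    have hn3 : ‖(t - t') • v'‖ = |t - t'| * ‖v'‖ := by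
      rw [norm_smul, Real.norm_eq_abs]
    have hn4 : |t - t'| * ‖v'‖ ≤ 2*δ := by
      calc |t - t'| * ‖v'‖ ≤ (2*δ) * 1 :=
            mul_le_mul htt' hv' (norm_nonneg _) (by linarith)
        _ = 2*δ := by ring
    linarith
  obtain ⟨t₀, ht₀, h₀1, h₀2⟩ := exists_near hδ0 x v p₀ hp₀.1
  set L := 12*δ/τ with hL
  have hLpos : 0 < L := by positivity
  have claim : ∀ p ∈ T ∩ T', ‖p.1 - (x + p.2 • v)‖ ≤ 2*δ ∧ |p.2 - p₀.2| ≤ L := by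
    intro p hp
    obtain ⟨t, ht, h1, h2⟩ := exists_near hδ0 x v p hp.1
    constructor
    · have heq : p.1 - (x + p.2 • v) = (p.1 - (x + t • v)) - (p.2 - t) • v := by module
      rw [heq]
      have hn1 := norm_sub_le (p.1 - (x + t • v)) ((p.2 - t) • v)
      have hn3 : ‖(p.2 - t) • v‖ = |p.2 - t| * ‖v‖ := by rw [norm_smul, Real.norm_eq_abs]
      have hn4 : |p.2 - t| * ‖v‖ ≤ δ * 1 := mul_le_mul h2 hv (norm_nonneg _) hδ0
      linarith
    · have k1 := key p hp t h1 h2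
      have k0 := key p₀ hp₀ t₀ h₀1 h₀2
      have h8 : ‖(t - t₀) • (v - v')‖ ≤ 8*δ := by
        have heq : (t - t₀) • (v - v') =
            ((x - x') + t • (v - v')) - ((x - x') + t₀ • (v - v')) := by module
        rw [heq]
        exact (norm_sub_le _ _).trans (by linarith)
      have h8' : |t - t₀| * τ ≤ 8*δ := by
        rw [norm_smul, Real.norm_eq_abs] at h8
        nlinarith [abs_nonneg (t - t₀)]
      have htt0 : |t - t₀| ≤ 8*δ/τ := by
        rw [le_div_iff₀ hτ]; exact h8'
      have h2δ : 2*δ ≤ 4*δ/τ := by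
        rw [le_div_iff₀ hτ]; nlinarith
      have htri : |p.2 - p₀.2| ≤ |p.2 - t| + |t - t₀| + |t₀ - p₀.2| := by
        have a1 := abs_sub_le p.2 t p₀.2
        have a2 := abs_sub_le t t₀ p₀.2
        linarith
      have h₀2' : |t₀ - p₀.2| ≤ δ := by rwa [abs_sub_comm]
      have : |p.2 - p₀.2| ≤ 2*δ + 8*δ/τ := by linarith
      rw [hL]
      have : 2*δ + 8*δ/τ ≤ 12*δ/τ := by
        have : 4*δ/τ + 8*δ/τ = 12*δ/τ := by ring
        linarith
      linarith
  -- measure computation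
  have hmeas : MeasurableSet (T ∩ T') :=
    ((isClosed_cthickening).inter isClosed_cthickening).measurableSet
  set V : ENNReal := ENNReal.ofReal ((2*δ)^(n-1)) * B with hV
  have hfr : Module.finrank ℝ E = n - 1 := finrank_euclideanSpace_fin
  calc volume (T ∩ T')
      = ∫⁻ s, volume ((fun y => (y, s)) ⁻¹' (T ∩ T')) := by
        rw [Measure.volume_eq_prod, Measure.prod_apply_symm hmeas]
    _ ≤ ∫⁻ s, (Set.Icc (p₀.2 - L) (p₀.2 + L)).indicator (fun _ => V) s := by
        refine lintegral_mono fun s => ?_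
        by_cases hs : |s - p₀.2| ≤ L
        · have hmem : s ∈ Set.Icc (p₀.2 - L) (p₀.2 + L) := by
            rw [Set.mem_Icc]
            obtain ⟨ha, hb⟩ := abs_le.mp hs
            constructor <;> linarith
          rw [Set.indicator_of_mem hmem]
          have hsub : (fun y => (y, s)) ⁻¹' (T ∩ T') ⊆ closedBall (x + s • v) (2*δ) := by
            intro y hy
            have := (claim (y, s) hy).1
            simpa [mem_closedBall, dist_eq_norm] using this
          calc volume ((fun y => (y, s)) ⁻¹' (T ∩ T'))
              ≤ volume (closedBall (x + s • v) (2*δ)) := measure_mono hsub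
            _ = ENNReal.ofReal ((2*δ)^(Module.finrank ℝ E)) * B :=
                Measure.addHaar_closedBall _ _ (by positivity)
            _ = V := by rw [hfr]
        · have hempty : (fun y => (y, s)) ⁻¹' (T ∩ T') = ∅ := by
            refine Set.eq_empty_of_forall_notMem fun y hy => hs (claim (y, s) hy).2
          rw [hempty, measure_empty]
          exact zero_le
    _ = V * volume (Set.Icc (p₀.2 - L) (p₀.2 + L)) :=
        lintegral_indicator_const measurableSet_Icc V
    _ ≤ ENNReal.ofReal (24 * 2^(n-1) * B.toReal * δ ^ n / τ) := by
        rw [Real.volume_Icc]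
        have h2L : p₀.2 + L - (p₀.2 - L) = 2*L := by ring
        rw [h2L, hL, hV, ← ENNReal.ofReal_toReal hBfin]
        rw [← ENNReal.ofReal_mul (by positivity), ← ENNReal.ofReal_mul (by positivity)]
        refine ENNReal.ofReal_le_ofReal (le_of_eq ?_)
        have hpow : δ^(n-1) * δ = δ^n := by
          rw [← pow_succ]
          congr 1
          omega
        rw [mul_pow]
        field_simp
        rw [ENNReal.toReal_ofReal hBpos.le]
        linear_combination (24 * B.toReal) * hpow
end

section
/- Let p, q, r, α satisfy the Knapp condition with equality failure: if f is (a smooth bump adapted to) the characteristic function of the δ-neighbourhood T of a unit line segment l₀ = l(0,0) = {(0,t) : t ∈ [0,1]} in ℝⁿ, then ‖f‖_p ≍ δ^{(n-1)/p}, and for all (x,v) with |x| ≤ δ, |v| ≤ δ we have Xf(l(x,v)) ≥ c > 0, hence ‖Xf‖_{L^q_v L^r_x} ≥ c δ^{(n-1)/q + (n-1)/r}. Consequently, if the a priori estimate ‖Xf‖_{L^q_v L^r_x} ≤ C δ^{-α} ‖f‖_p holds for all such f and all small δ, then (n-1)/q + (n-1)/r ≥ (n-1)/p − α. -/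
open Metric MeasureTheory

/-- The x-ray transform `Xf(l(x,v)) = ∫₀¹ f(x+tv, t) dt` (for nonnegative `f`). -/
noncomputable def xray (n : ℕ) (f : (EuclideanSpace ℝ (Fin n)) × ℝ → ENNReal)
    (x v : EuclideanSpace ℝ (Fin n)) : ENNReal :=
  ∫⁻ t in Set.Icc (0 : ℝ) 1, f (x + t • v, t)

/-- The mixed norm `‖F‖_{L^q_v L^r_x}` over `(v,x) ∈ B^{n-1}(0,1)²`. -/
noncomputable def mixedNorm (n : ℕ) (q r : ℝ)
    (F : EuclideanSpace ℝ (Fin n) → EuclideanSpace ℝ (Fin n) → ENNReal) : ENNReal :=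
  (∫⁻ v in ball (0 : EuclideanSpace ℝ (Fin n)) 1,
      (∫⁻ x in ball (0 : EuclideanSpace ℝ (Fin n)) 1, (F v x) ^ r) ^ (q / r)) ^ (1 / q)

lemma aux_exp (a b s t δ₁ : ℝ) (ha : 0 < a) (hb : 0 < b) (hδ₁ : 0 < δ₁)
    (h : ∀ δ : ℝ, 0 < δ → δ ≤ δ₁ → a * δ ^ s ≤ b * δ ^ t) : t ≤ s := by
  by_contra hst
  push_neg at hst
  set c : ℝ := (a / (2 * b)) ^ (1 / (t - s)) with hc
  have hc0 : 0 < c := Real.rpow_pos_of_pos (by positivity) _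
  set δ : ℝ := min δ₁ c with hδdef
  have hδ0 : 0 < δ := lt_min hδ₁ hc0
  have h1 := h δ hδ0 (min_le_left _ _)
  have hts : 0 < t - s := by linarith
  have h2 : δ ^ (t - s) ≤ a / (2 * b) := by
    calc δ ^ (t - s) ≤ c ^ (t - s) :=
          Real.rpow_le_rpow hδ0.le (min_le_right _ _) hts.le
      _ = a / (2 * b) := by
          rw [hc, ← Real.rpow_mul (by positivity)]
          rw [one_div, inv_mul_cancel₀ hts.ne', Real.rpow_one]
  have h3 : b * δ ^ t = b * δ ^ (t - s) * δ ^ s := by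
    rw [mul_assoc, ← Real.rpow_add hδ0]; ring_nf
  have h4 : b * δ ^ (t - s) ≤ a / 2 := by
    have := mul_le_mul_of_nonneg_left h2 hb.le
    calc b * δ ^ (t-s) ≤ b * (a / (2*b)) := this
      _ = a / 2 := by field_simp
  have h5 : 0 < δ ^ s := Real.rpow_pos_of_pos hδ0 _
  nlinarith

lemma xray_one (m : ℕ) (δ : ℝ) (x v : EuclideanSpace ℝ (Fin m))
    (hx : x ∈ ball (0 : EuclideanSpace ℝ (Fin m)) (δ/2))
    (hv : v ∈ ball (0 : EuclideanSpace ℝ (Fin m)) (δ/2)) :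
    xray m ((cthickening δ (seg m 0 0)).indicator fun _ => (1 : ENNReal)) x v = 1 := by
  have hmem : ∀ t ∈ Set.Icc (0:ℝ) 1,
      ((x + t • v, t) : EuclideanSpace ℝ (Fin m) × ℝ) ∈ cthickening δ (seg m 0 0) := by
    intro t ht
    refine mem_cthickening_of_dist_le _ ((0 : EuclideanSpace ℝ (Fin m)), t) δ (seg m 0 0)
      ⟨t, ht, by simp⟩ ?_
    rw [Prod.dist_eq]
    simp only [dist_self, max_eq_left dist_nonneg]
    rw [dist_zero_right]
    calc ‖x + t • v‖ ≤ ‖x‖ + ‖t • v‖ := norm_add_le _ _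
      _ ≤ δ/2 + δ/2 := by
          rw [mem_ball, dist_zero_right] at hx hv
          refine add_le_add hx.le ?_
          rw [norm_smul, Real.norm_eq_abs, abs_of_nonneg ht.1]
          calc t * ‖v‖ ≤ 1 * ‖v‖ := by
                have : (0:ℝ) ≤ ‖v‖ := norm_nonneg _
                nlinarith [ht.2]
            _ = ‖v‖ := one_mul _
            _ ≤ δ/2 := hv.le
      _ = δ := by ring
  unfold xray
  rw [setLIntegral_congr_fun measurableSet_Icc
    (fun t ht => by
      rw [Set.indicator_of_mem (hmem t ht)])]
  rw [setLIntegral_one, Real.volume_Icc]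
  norm_num

lemma vol_thick (m : ℕ) (δ : ℝ) (hδ : 0 < δ) :
    volume (cthickening δ (seg m 0 0)) ≤
      volume (closedBall (0 : EuclideanSpace ℝ (Fin m)) (2*δ)) * ENNReal.ofReal (1 + 4*δ) := by
  have hsub : cthickening δ (seg m 0 0) ⊆
      (closedBall (0 : EuclideanSpace ℝ (Fin m)) (2*δ)) ×ˢ (Set.Icc (-(2*δ)) (1 + 2*δ)) := by
    intro p hp
    have := cthickening_subset_iUnion_closedBall_of_lt (seg m 0 0) (by linarith : (0:ℝ) < 2*δ)
      (by linarith) hp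
    obtain ⟨y, hy, hpy⟩ := Set.mem_iUnion₂.mp this
    obtain ⟨t, ht, rfl⟩ := hy
    simp only [smul_zero, add_zero] at hpy ⊢
    rw [mem_closedBall, Prod.dist_eq, max_le_iff] at hpy
    constructor
    · exact mem_closedBall.mpr (by simpa using hpy.1)
    · have h2 := hpy.2
      rw [Real.dist_eq, abs_le] at h2
      constructor <;> [linarith [ht.1]; linarith [ht.2]]
  calc volume (cthickening δ (seg m 0 0)) ≤ _ := measure_mono hsub
    _ = _ := by
        rw [MeasureTheory.Measure.volume_eq_prod, Measure.prod_prod, Real.volume_Icc]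
        congr 1
        ring_nf

/-- Knapp example necessary condition: if the a priori x-ray estimate
`‖Xf‖_{L^q_v L^r_x} ≤ C δ^{-α} ‖f‖_p` holds for the characteristic functions of the
δ-neighbourhoods of the segment `l(0,0)` for all small `δ`, then
`(n-1)/q + (n-1)/r ≥ (n-1)/p − α`. -/
theorem stmt8 (n : ℕ) (hn : 2 ≤ n) (p q r α C δ₀ : ℝ)
    (hp : 1 ≤ p) (hq : 1 ≤ q) (hr : 1 ≤ r) (hα : 0 ≤ α) (hC : 0 < C) (hδ₀ : 0 < δ₀)
    (H : ∀ δ : ℝ, 0 < δ → δ ≤ δ₀ →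
      mixedNorm (n - 1) q r
          (fun v x => xray (n - 1)
            ((cthickening δ (seg (n - 1) 0 0)).indicator fun _ => (1 : ENNReal)) x v)
        ≤ ENNReal.ofReal (C * δ ^ (-α)) *
          (volume (cthickening δ (seg (n - 1) 0 0))) ^ (1 / p)) :
    ((n : ℝ) - 1) / q + ((n : ℝ) - 1) / r ≥ ((n : ℝ) - 1) / p - α := by
  set m := n - 1 with hm
  have hm1 : 1 ≤ m := by omega
  haveI : Nonempty (Fin m) := ⟨⟨0, by omega⟩⟩
  haveI : Nontrivial (EuclideanSpace ℝ (Fin m)) := inferInstance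
  have hp0 : (0:ℝ) < p := lt_of_lt_of_le one_pos hp
  have hq0 : (0:ℝ) < q := lt_of_lt_of_le one_pos hq
  have hr0 : (0:ℝ) < r := lt_of_lt_of_le one_pos hr
  set ω : ENNReal := volume (ball (0 : EuclideanSpace ℝ (Fin m)) 1) with hω
  set κ : ENNReal := volume (closedBall (0 : EuclideanSpace ℝ (Fin m)) 1) with hκ
  have hω0 : ω ≠ 0 := (measure_ball_pos _ _ one_pos).ne'
  have hωt : ω ≠ ⊤ := measure_ball_lt_top.ne
  have hκ0 : κ ≠ 0 := fun h => hω0 (le_antisymm (h ▸ measure_mono ball_subset_closedBall)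
    zero_le)
  have hκt : κ ≠ ⊤ := measure_closedBall_lt_top.ne
  set w : ℝ := ω.toReal with hw
  set k : ℝ := κ.toReal with hk
  have hw0 : 0 < w := ENNReal.toReal_pos hω0 hωt
  have hk0 : 0 < k := ENNReal.toReal_pos hκ0 hκt
  set s : ℝ := 1/r + 1/q with hs
  have hs0 : 0 < s := by positivity
  set a : ℝ := (w / 2^m) ^ s with ha
  set b : ℝ := C * (2^m * k * 5) ^ (1/p) with hb
  have ha0 : 0 < a := Real.rpow_pos_of_pos (by positivity) _
  have hb0 : 0 < b := by
    have : (0:ℝ) < (2^m * k * 5 : ℝ) ^ (1/p) := Real.rpow_pos_of_pos (by positivity) _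
    positivity
  -- the key inequality for each small δ
  have key : ∀ δ : ℝ, 0 < δ → δ ≤ min δ₀ 1 →
      a * δ ^ ((m:ℝ) * s) ≤ b * δ ^ ((m:ℝ)/p - α) := by
    intro δ hδ0 hδle
    have hδδ₀ : δ ≤ δ₀ := le_trans hδle (min_le_left _ _)
    have hδ1 : δ ≤ 1 := le_trans hδle (min_le_right _ _)
    have hδ2 : δ/2 ≤ 1 := by linarith
    have hδ2' : (0:ℝ) < δ/2 := by linarith
    set W : ENNReal := volume (ball (0 : EuclideanSpace ℝ (Fin m)) (δ/2)) with hW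
    have hWval : W = ENNReal.ofReal ((δ/2)^m * w) := by
      rw [hW, Measure.addHaar_ball _ _ hδ2'.le, finrank_euclideanSpace_fin,
        ENNReal.ofReal_mul (by positivity), ← hω, hw, ENNReal.ofReal_toReal hωt]
    have hW0 : W ≠ 0 := (measure_ball_pos _ _ hδ2').ne'
    have hWt : W ≠ ⊤ := measure_ball_lt_top.ne
    -- inner integral lower bound
    have inner_bd : ∀ v ∈ ball (0 : EuclideanSpace ℝ (Fin m)) (δ/2),
        W ≤ ∫⁻ x in ball (0 : EuclideanSpace ℝ (Fin m)) 1,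
          (xray m ((cthickening δ (seg m 0 0)).indicator fun _ => (1 : ENNReal)) x v) ^ r := by
      intro v hv
      have : W = ∫⁻ x in ball (0 : EuclideanSpace ℝ (Fin m)) (δ/2),
          (xray m ((cthickening δ (seg m 0 0)).indicator fun _ => (1 : ENNReal)) x v) ^ r := by
        rw [setLIntegral_congr_fun measurableSet_ball
          (fun x hx => by
            rw [xray_one m δ x v hx hv, ENNReal.one_rpow]), setLIntegral_one]
      rw [this]
      exact lintegral_mono_set (ball_subset_ball (by linarith))
    -- outer bound
    have outer_bd : W ^ (q/r) * W ≤
        ∫⁻ v in ball (0 : EuclideanSpace ℝ (Fin m)) 1,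
          (∫⁻ x in ball (0 : EuclideanSpace ℝ (Fin m)) 1,
            (xray m ((cthickening δ (seg m 0 0)).indicator fun _ => (1 : ENNReal)) x v) ^ r)
              ^ (q/r) := by
      have step1 : W ^ (q/r) * W = ∫⁻ _ in ball (0 : EuclideanSpace ℝ (Fin m)) (δ/2),
          W ^ (q/r) := by rw [setLIntegral_const, hW]
      rw [step1]
      refine le_trans (setLIntegral_mono' measurableSet_ball fun v hv => ?_)
        (lintegral_mono_set (ball_subset_ball (by linarith)))
      exact ENNReal.rpow_le_rpow (inner_bd v hv) (by positivity)
    have mix_bd : W ^ (s * 1) ≤ mixedNorm m q r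
        (fun v x => xray m
          ((cthickening δ (seg m 0 0)).indicator fun _ => (1 : ENNReal)) x v) := by
      have e1 : W ^ (q/r) * W = W ^ (q/r + 1) := by
        rw [ENNReal.rpow_add _ _ hW0 hWt, ENNReal.rpow_one]
      have e2 : ((q/r + 1) * (1/q)) = s := by
        rw [hs]
        field_simp
      calc W ^ (s * 1) = (W ^ (q/r + 1)) ^ (1/q) := by
            rw [← ENNReal.rpow_mul, e2, mul_one]
        _ = (W ^ (q/r) * W) ^ (1/q) := by rw [e1]
        _ ≤ _ := ENNReal.rpow_le_rpow outer_bd (by positivity)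
    rw [mul_one] at mix_bd
    -- volume upper bound
    have vol_bd : volume (cthickening δ (seg m 0 0)) ≤
        ENNReal.ofReal ((2*δ)^m * k * (1 + 4*δ)) := by
      refine le_trans (vol_thick m δ hδ0) ?_
      rw [Measure.addHaar_closedBall' _ _ (by linarith : (0:ℝ) ≤ 2*δ),
        finrank_euclideanSpace_fin, ← hκ, hk]
      rw [ENNReal.ofReal_mul (by positivity), ENNReal.ofReal_mul (by positivity),
        ENNReal.ofReal_toReal hκt]
    -- combine with H
    have hH := H δ hδ0 hδδ₀
    have chain : ENNReal.ofReal (((δ/2)^m * w) ^ s) ≤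
        ENNReal.ofReal (C * δ ^ (-α)) * ENNReal.ofReal ((2*δ)^m * k * (1 + 4*δ)) ^ (1/p) := by
      calc ENNReal.ofReal (((δ/2)^m * w) ^ s)
          = W ^ s := by
            rw [hWval, ENNReal.ofReal_rpow_of_pos (by positivity)]
        _ ≤ _ := le_trans mix_bd (le_trans hH
            (mul_le_mul_right (ENNReal.rpow_le_rpow vol_bd (by positivity)) _))
    rw [ENNReal.ofReal_rpow_of_pos (by positivity),
      ← ENNReal.ofReal_mul (by positivity)] at chain
    have hreal : ((δ/2)^m * w) ^ s ≤ C * δ ^ (-α) * ((2*δ)^m * k * (1 + 4*δ)) ^ (1/p) := by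
      refine (ENNReal.ofReal_le_ofReal_iff ?_).mp chain
      positivity
    -- massage into the exponent form
    have lhs_eq : ((δ/2)^m * w) ^ s = a * δ ^ ((m:ℝ) * s) := by
      have : ((δ/2:ℝ))^m * w = δ^m * (w / 2^m) := by
        rw [div_pow]
        field_simp
      rw [this, Real.mul_rpow (by positivity) (by positivity),
        ← Real.rpow_natCast δ m, ← Real.rpow_mul hδ0.le, ha]
      ring
    have rhs_le : C * δ ^ (-α) * ((2*δ)^m * k * (1 + 4*δ)) ^ (1/p) ≤
        b * δ ^ ((m:ℝ)/p - α) := by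
      have h1 : ((2*δ)^m * k * (1 + 4*δ) : ℝ) ≤ (2*δ)^m * k * 5 := by
        have : (0:ℝ) < (2*δ)^m * k := by positivity
        nlinarith
      have h2 : ((2*δ)^m * k * (1 + 4*δ) : ℝ) ^ (1/p) ≤ ((2*δ)^m * k * 5) ^ (1/p) :=
        Real.rpow_le_rpow (by positivity) h1 (by positivity)
      have h3 : ((2*δ)^m * k * 5 : ℝ) ^ (1/p) = (2^m * k * 5) ^ (1/p) * δ ^ ((m:ℝ)/p) := by
        have e : ((2*δ)^m * k * 5 : ℝ) = (2^m * k * 5) * δ^m := by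
          rw [mul_pow]; ring
        rw [e, Real.mul_rpow (by positivity) (by positivity),
          ← Real.rpow_natCast δ m, ← Real.rpow_mul hδ0.le]
        congr 2
        ring
      calc C * δ ^ (-α) * ((2*δ)^m * k * (1 + 4*δ)) ^ (1/p)
          ≤ C * δ ^ (-α) * (((2*δ)^m * k * 5) ^ (1/p)) := by
            refine mul_le_mul_of_nonneg_left h2 ?_
            have := Real.rpow_pos_of_pos hδ0 (-α)
            positivity
        _ = b * (δ ^ (-α) * δ ^ ((m:ℝ)/p)) := by rw [h3, hb]; ring
        _ = b * δ ^ ((m:ℝ)/p - α) := by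
            rw [← Real.rpow_add hδ0]
            congr 1
            ring
    calc a * δ ^ ((m:ℝ) * s) = ((δ/2)^m * w) ^ s := lhs_eq.symm
      _ ≤ _ := hreal
      _ ≤ _ := rhs_le
  -- apply the exponent comparison
  have hmain : (m:ℝ)/p - α ≤ (m:ℝ) * s :=
    aux_exp a b ((m:ℝ) * s) ((m:ℝ)/p - α) (min δ₀ 1) ha0 hb0 (lt_min hδ₀ one_pos) key
  have hcast : ((m:ℝ)) = (n:ℝ) - 1 := by
    rw [hm]
    push_cast [Nat.cast_sub (by omega : 1 ≤ n)]
    ring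
  rw [hcast, hs] at hmain
  rw [ge_iff_le]
  have : ((n:ℝ) - 1) * (1/r + 1/q) = ((n:ℝ)-1)/r + ((n:ℝ)-1)/q := by ring
  linarith [hmain, this ▸ hmain]
end

section
/- Let S be the θ/2-neighbourhood of a 2-plane in ℝⁿ (a θ-slab), and let T be the δ-neighbourhood of a unit line segment l with δ ≤ θ. If the angle between l and the 2-plane is α ≥ θ, then |S ∩ T| ≤ C(n) δ^{n-1} θ / α. -/
open Metric MeasureTheory RealInnerProductSpace

section Aux

variable {E : Type*} [NormedAddCommGroup E] [InnerProductSpace ℝ E]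

/-- Minimal distance property of the orthogonal projection. -/
lemma aux_min_dist (K : Submodule ℝ E) [K.HasOrthogonalProjection] (x v : E) (hv : v ∈ K) :
    ‖x - (K.orthogonalProjectionOnto x : E)‖ ≤ ‖x - v‖ := by
  have hw : x - (K.orthogonalProjectionOnto x : E) ∈ Kᗮ :=
    K.sub_starProjection_mem_orthogonal x
  have hmem : (K.orthogonalProjectionOnto x : E) - v ∈ K :=
    K.sub_mem (SetLike.coe_mem _) hv
  have hinner : ⟪x - (K.orthogonalProjectionOnto x : E), (K.orthogonalProjectionOnto x : E) - v⟫ = 0 :=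
    Submodule.inner_left_of_mem_orthogonal hmem hw
  have hdecomp : x - v = (x - (K.orthogonalProjectionOnto x : E)) +
      ((K.orthogonalProjectionOnto x : E) - v) := by abel
  have h2 : ‖x - v‖ ^ 2 = ‖x - (K.orthogonalProjectionOnto x : E)‖ ^ 2 +
      ‖(K.orthogonalProjectionOnto x : E) - v‖ ^ 2 := by
    rw [hdecomp, norm_add_sq_real, hinner]; ring
  nlinarith [norm_nonneg (x - v), norm_nonneg (x - (K.orthogonalProjectionOnto x : E)),
    sq_nonneg ‖(K.orthogonalProjectionOnto x : E) - v‖]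

end Aux

set_option maxHeartbeats 1000000 in
/-- Slab-tube intersection estimate: if `S` is the `θ/2`-neighbourhood of a 2-plane and
`T` the `δ`-neighbourhood of a unit segment making angle at least `α ≥ θ ≥ δ` with the
plane, then `|S ∩ T| ≤ C(n) δ^{n-1} θ / α`. -/
theorem stmt16 (n : ℕ) (hn : 3 ≤ n) :
    ∃ C : ℝ, 0 < C ∧
    ∀ (δ θ α : ℝ) (p₀ e₁ e₂ a b : EuclideanSpace ℝ (Fin n)),
      0 < δ → δ ≤ θ → θ ≤ α → α ≤ Real.pi / 2 →
      ‖e₁‖ = 1 → ‖e₂‖ = 1 → ⟪e₁, e₂⟫ = 0 →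
      dist a b = 1 →
      (∀ w ∈ Submodule.span ℝ ({e₁, e₂} : Set (EuclideanSpace ℝ (Fin n))), w ≠ 0 →
        α ≤ InnerProductGeometry.angle (b - a) w) →
      volume (cthickening (θ / 2) {y | ∃ s t : ℝ, y = p₀ + s • e₁ + t • e₂} ∩
          cthickening δ (segment ℝ a b))
        ≤ ENNReal.ofReal (C * δ ^ (n - 1) * θ / α) := by
  have hπ : (0:ℝ) < Real.pi := Real.pi_pos
  set B : ENNReal := volume (ball (0 : EuclideanSpace ℝ (Fin n)) 1) with hBdef
  have hB0 : 0 < B := measure_ball_pos _ _ one_pos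
  have hBtop : B ≠ ⊤ := measure_ball_lt_top.ne
  have hBt : 0 < B.toReal := ENNReal.toReal_pos hB0.ne' hBtop
  refine ⟨2 ^ n * 16 * B.toReal, by positivity, ?_⟩
  intro δ θ α p₀ e₁ e₂ a b hδ hδθ hθα hαπ2 he₁ he₂ he12 hab hangle
  have hθ : 0 < θ := hδ.trans_le hδθ
  have hα : 0 < α := hθ.trans_le hθα
  set K : Submodule ℝ (EuclideanSpace ℝ (Fin n)) :=
    Submodule.span ℝ ({e₁, e₂} : Set (EuclideanSpace ℝ (Fin n))) with hKdef
  set Q : EuclideanSpace ℝ (Fin n) →L[ℝ] EuclideanSpace ℝ (Fin n) :=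
    ContinuousLinearMap.id ℝ _ - K.subtypeL.comp (K.orthogonalProjectionOnto) with hQdefn
  have hQdef : ∀ x, Q x = x - (K.orthogonalProjectionOnto x : EuclideanSpace ℝ (Fin n)) := by
    intro x
    simp [hQdefn, ContinuousLinearMap.sub_apply, Submodule.subtypeL_apply]
  have hQmin : ∀ x v, v ∈ K → ‖Q x‖ ≤ ‖x - v‖ := by
    intro x v hv; rw [hQdef]; exact aux_min_dist K x v hv
  have hQle : ∀ x, ‖Q x‖ ≤ ‖x‖ := by
    intro x; simpa using hQmin x 0 K.zero_mem
  have hQorth : ∀ x, Q x ∈ Kᗮ := by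
    intro x; rw [hQdef]; exact K.sub_starProjection_mem_orthogonal x
  have hu : ‖b - a‖ = 1 := by rw [norm_sub_rev, ← dist_eq_norm]; exact hab
  -- lower bound on the orthogonal component of the direction
  have hsin : Real.sin α ≤ ‖Q (b - a)‖ := by
    obtain ⟨Pu, hPudef⟩ : ∃ P : EuclideanSpace ℝ (Fin n),
        P = (K.orthogonalProjectionOnto (b - a) : EuclideanSpace ℝ (Fin n)) := ⟨_, rfl⟩
    have hPmem : Pu ∈ K := hPudef ▸ SetLike.coe_mem _
    have hsum : Pu + Q (b - a) = b - a := by rw [hPudef, hQdef]; abel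
    have horth : ⟪Pu, Q (b - a)⟫ = 0 :=
      Submodule.inner_right_of_mem_orthogonal hPmem (hQorth _)
    have hpyth : ‖Pu‖ ^ 2 + ‖Q (b - a)‖ ^ 2 = 1 := by
      have h := norm_add_sq_real Pu (Q (b - a))
      rw [hsum, hu, horth] at h
      nlinarith
    have hsinnn : 0 ≤ Real.sin α :=
      Real.sin_nonneg_of_nonneg_of_le_pi hα.le (by linarith)
    by_cases hP0 : Pu = 0
    · rw [hP0] at hpyth
      simp only [norm_zero] at hpyth
      have h1 : ‖Q (b - a)‖ = 1 := by nlinarith [norm_nonneg (Q (b - a))]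
      rw [h1]; exact Real.sin_le_one α
    · have hang := hangle _ hPmem hP0
      have hcos := Real.cos_le_cos_of_nonneg_of_le_pi hα.le
        (InnerProductGeometry.angle_le_pi (b - a) _) hang
      have hPnorm : ‖Pu‖ ≠ 0 := norm_ne_zero_iff.mpr hP0
      have hip : ⟪b - a, Pu⟫ = ‖Pu‖ ^ 2 := by
        rw [← hsum, inner_add_left, real_inner_self_eq_norm_sq, real_inner_comm, horth,
          add_zero]
      have hc : Real.cos (InnerProductGeometry.angle (b - a) Pu) = ‖Pu‖ := by
        rw [InnerProductGeometry.cos_angle, hip, hu, one_mul, sq]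
        field_simp
      rw [hc] at hcos
      have hcosnn : 0 ≤ Real.cos α :=
        Real.cos_nonneg_of_mem_Icc ⟨by linarith, hαπ2⟩
      have hsc := Real.sin_sq_add_cos_sq α
      nlinarith [norm_nonneg (Q (b - a)), norm_nonneg Pu]
  have hq2 : 2 / Real.pi * α ≤ ‖Q (b - a)‖ :=
    le_trans (Real.mul_le_sin hα.le hαπ2) hsin
  have hqpos : 0 < ‖Q (b - a)‖ := lt_of_lt_of_le (by positivity) hq2
  -- slab membership gives a bound on the orthogonal component
  have hplane_mem : ∀ x, x ∈ cthickening (θ / 2) {y | ∃ s t : ℝ, y = p₀ + s • e₁ + t • e₂} →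
      ‖Q (x - p₀)‖ ≤ θ / 2 := by
    intro x hx
    rw [mem_cthickening_iff] at hx
    have hle : ENNReal.ofReal ‖Q (x - p₀)‖ ≤
        Metric.infEDist x {y | ∃ s t : ℝ, y = p₀ + s • e₁ + t • e₂} := by
      rw [Metric.le_infEDist]
      rintro y ⟨s, t, rfl⟩
      rw [edist_dist]
      apply ENNReal.ofReal_le_ofReal
      have hv : s • e₁ + t • e₂ ∈ K :=
        K.add_mem (K.smul_mem s (Submodule.subset_span (by simp)))
          (K.smul_mem t (Submodule.subset_span (by simp)))
      calc ‖Q (x - p₀)‖ ≤ ‖x - p₀ - (s • e₁ + t • e₂)‖ := hQmin _ _ hv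
        _ = dist x (p₀ + s • e₁ + t • e₂) := by rw [dist_eq_norm]; congr 1; abel
    exact (ENNReal.ofReal_le_ofReal_iff (by linarith)).mp (hle.trans hx)
  -- tube membership gives a parameter
  have hseg_cpt : IsCompact (segment ℝ a b) := by
    rw [segment_eq_image']
    exact isCompact_Icc.image (by fun_prop)
  have htube : ∀ x ∈ cthickening δ (segment ℝ a b),
      ∃ t ∈ Set.Icc (0:ℝ) 1, dist x (a + t • (b - a)) ≤ δ := by
    intro x hx
    rw [cthickening_eq_biUnion_closedBall _ hδ.le, hseg_cpt.isClosed.closure_eq] at hx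
    obtain ⟨y, hy, hxy⟩ := Set.mem_iUnion₂.mp hx
    rw [segment_eq_image'] at hy
    obtain ⟨t, ht, rfl⟩ := hy
    exact ⟨t, ht, mem_closedBall.mp hxy⟩
  -- combined key fact
  have hkey : ∀ x ∈ cthickening (θ / 2) {y | ∃ s t : ℝ, y = p₀ + s • e₁ + t • e₂} ∩
      cthickening δ (segment ℝ a b),
      ∃ t ∈ Set.Icc (0:ℝ) 1, dist x (a + t • (b - a)) ≤ δ ∧
        ‖Q (a - p₀) + t • Q (b - a)‖ ≤ θ / 2 + δ := by
    intro x hx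
    obtain ⟨t, ht, hdist⟩ := htube x hx.2
    refine ⟨t, ht, hdist, ?_⟩
    have h1 : ‖Q (x - p₀)‖ ≤ θ / 2 := hplane_mem x hx.1
    have h2 : ‖Q (a + t • (b - a) - p₀) - Q (x - p₀)‖ ≤ δ := by
      rw [← map_sub]
      calc ‖Q (a + t • (b - a) - p₀ - (x - p₀))‖
          ≤ ‖a + t • (b - a) - p₀ - (x - p₀)‖ := hQle _
        _ = dist x (a + t • (b - a)) := by rw [dist_eq_norm']; congr 1; abel
        _ ≤ δ := hdist
    have h3 : Q (a + t • (b - a) - p₀) = Q (a - p₀) + t • Q (b - a) := by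
      rw [← _root_.map_smul, ← map_add]
      congr 1
      abel
    calc ‖Q (a - p₀) + t • Q (b - a)‖ = ‖Q (a + t • (b - a) - p₀)‖ := by rw [h3]
      _ = ‖Q (x - p₀) + (Q (a + t • (b - a) - p₀) - Q (x - p₀))‖ := by congr 1; abel
      _ ≤ ‖Q (x - p₀)‖ + ‖Q (a + t • (b - a) - p₀) - Q (x - p₀)‖ := norm_add_le _ _
      _ ≤ θ / 2 + δ := add_le_add h1 h2
  -- split on nonemptiness
  rcases Set.eq_empty_or_nonempty
    (cthickening (θ / 2) {y | ∃ s t : ℝ, y = p₀ + s • e₁ + t • e₂} ∩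
      cthickening δ (segment ℝ a b)) with hemp | ⟨x₀, hx₀⟩
  · rw [hemp, measure_empty]; exact zero_le
  obtain ⟨t₀, ht₀, hd₀, hφ₀⟩ := hkey x₀ hx₀
  set M : ℝ := 3 * Real.pi * θ / (2 * α) with hMdef
  have hM0 : 0 ≤ M := by positivity
  have hM2δ : 0 ≤ 2 * M / δ := by positivity
  set N : ℕ := ⌈2 * M / δ⌉₊ with hNdef
  -- the covering
  have hcover : cthickening (θ / 2) {y | ∃ s t : ℝ, y = p₀ + s • e₁ + t • e₂} ∩
      cthickening δ (segment ℝ a b) ⊆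
      ⋃ i ∈ Finset.range (N + 1),
        closedBall (a + (t₀ - M + (i : ℝ) * δ) • (b - a)) (2 * δ) := by
    intro x hx
    obtain ⟨t, ht, hdist, hφ⟩ := hkey x hx
    have htt₀ : |t - t₀| ≤ M := by
      have hEq : (Q (a - p₀) + t • Q (b - a)) - (Q (a - p₀) + t₀ • Q (b - a))
          = (t - t₀) • Q (b - a) := by rw [sub_smul]; abel
      have h1 : |t - t₀| * ‖Q (b - a)‖ ≤ θ + 2 * δ := by
        calc |t - t₀| * ‖Q (b - a)‖ = ‖(t - t₀) • Q (b - a)‖ := by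
              rw [norm_smul, Real.norm_eq_abs]
          _ = ‖(Q (a - p₀) + t • Q (b - a)) - (Q (a - p₀) + t₀ • Q (b - a))‖ := by rw [hEq]
          _ ≤ ‖Q (a - p₀) + t • Q (b - a)‖ + ‖Q (a - p₀) + t₀ • Q (b - a)‖ := norm_sub_le _ _
          _ ≤ (θ / 2 + δ) + (θ / 2 + δ) := add_le_add hφ hφ₀
          _ = θ + 2 * δ := by ring
      have h2 : |t - t₀| * (2 / Real.pi * α) ≤ 3 * θ := by
        have := mul_le_mul_of_nonneg_left hq2 (abs_nonneg (t - t₀))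
        linarith
      have h3 : |t - t₀| * (2 / Real.pi * α) * Real.pi ≤ 3 * θ * Real.pi :=
        mul_le_mul_of_nonneg_right h2 hπ.le
      have h4 : |t - t₀| * (2 / Real.pi * α) * Real.pi = |t - t₀| * (2 * α) := by
        field_simp
      rw [hMdef, le_div_iff₀ (by positivity : (0:ℝ) < 2 * α)]
      rw [h4] at h3
      linarith
    have hz0 : 0 ≤ t - t₀ + M := by have := abs_le.mp htt₀; linarith
    have hz2M : t - t₀ + M ≤ 2 * M := by have := abs_le.mp htt₀; linarith
    have hiN : ⌊(t - t₀ + M) / δ⌋₊ < N + 1 := by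
      have h1 : ⌊(t - t₀ + M) / δ⌋₊ ≤ N :=
        le_trans (Nat.floor_mono (by gcongr)) (Nat.floor_le_ceil _)
      omega
    refine Set.mem_biUnion (Finset.mem_range.mpr hiN) ?_
    rw [mem_closedBall]
    set i : ℕ := ⌊(t - t₀ + M) / δ⌋₊ with hidef
    have hiδle : (i : ℝ) * δ ≤ t - t₀ + M := by
      have h := Nat.floor_le (by positivity : (0:ℝ) ≤ (t - t₀ + M) / δ)
      calc (i : ℝ) * δ ≤ ((t - t₀ + M) / δ) * δ := by
            exact mul_le_mul_of_nonneg_right h hδ.le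
        _ = t - t₀ + M := div_mul_cancel₀ _ hδ.ne'
    have hziδ : t - t₀ + M - (i : ℝ) * δ ≤ δ := by
      have h := Nat.lt_floor_add_one ((t - t₀ + M) / δ)
      have h2 : t - t₀ + M < ((i : ℝ) + 1) * δ := by
        calc t - t₀ + M = ((t - t₀ + M) / δ) * δ := (div_mul_cancel₀ _ hδ.ne').symm
          _ < ((i : ℝ) + 1) * δ := by exact mul_lt_mul_of_pos_right h hδ
      nlinarith
    have hcd : dist (a + t • (b - a)) (a + (t₀ - M + (i : ℝ) * δ) • (b - a))
        = |t - t₀ + M - (i : ℝ) * δ| := by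
      have hEq2 : a + t • (b - a) - (a + (t₀ - M + (i : ℝ) * δ) • (b - a))
          = (t - t₀ + M - (i : ℝ) * δ) • (b - a) := by
        module
      rw [dist_eq_norm, hEq2, norm_smul, Real.norm_eq_abs, hu, mul_one]
    calc dist x (a + (t₀ - M + (i : ℝ) * δ) • (b - a))
        ≤ dist x (a + t • (b - a)) +
          dist (a + t • (b - a)) (a + (t₀ - M + (i : ℝ) * δ) • (b - a)) :=
          dist_triangle _ _ _
      _ ≤ δ + |t - t₀ + M - (i : ℝ) * δ| := add_le_add hdist (le_of_eq hcd)
      _ ≤ δ + δ := by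
          have habs : |t - t₀ + M - (i : ℝ) * δ| = t - t₀ + M - (i : ℝ) * δ :=
            abs_of_nonneg (by linarith)
          rw [habs]; linarith
      _ = 2 * δ := by ring
  -- measure computation
  have hreal : (2 * M / δ + 2) * (2 * δ) ^ n ≤ 16 * 2 ^ n * δ ^ (n - 1) * θ / α := by
    have hδn : δ ^ n = δ ^ (n - 1) * δ := by
      rw [← pow_succ]; congr 1; omega
    have hMα : M * (2 * α) = 3 * Real.pi * θ := by
      rw [hMdef]; field_simp
    have hstep : 2 * M + 2 * δ ≤ 16 * θ / α := by
      rw [le_div_iff₀ hα]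
      have h2δα : 2 * δ * α ≤ Real.pi * θ := by
        nlinarith [mul_le_mul hδθ hαπ2 hα.le hθ.le]
      have hπ4 : Real.pi ≤ 4 := Real.pi_le_four
      nlinarith [hθ.le]
    calc (2 * M / δ + 2) * (2 * δ) ^ n = 2 ^ n * δ ^ (n - 1) * (2 * M + 2 * δ) := by
          rw [mul_pow, hδn]
          field_simp
      _ ≤ 2 ^ n * δ ^ (n - 1) * (16 * θ / α) := by
          exact mul_le_mul_of_nonneg_left hstep (by positivity)
      _ = 16 * 2 ^ n * δ ^ (n - 1) * θ / α := by ring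
  calc volume (cthickening (θ / 2) {y | ∃ s t : ℝ, y = p₀ + s • e₁ + t • e₂} ∩
        cthickening δ (segment ℝ a b))
      ≤ volume (⋃ i ∈ Finset.range (N + 1),
          closedBall (a + (t₀ - M + (i : ℝ) * δ) • (b - a)) (2 * δ)) := measure_mono hcover
    _ ≤ ∑ i ∈ Finset.range (N + 1),
          volume (closedBall (a + (t₀ - M + (i : ℝ) * δ) • (b - a)) (2 * δ)) :=
        measure_biUnion_finset_le _ _
    _ = ∑ i ∈ Finset.range (N + 1), ENNReal.ofReal ((2 * δ) ^ n) * B := by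
        refine Finset.sum_congr rfl fun i _ => ?_
        rw [Measure.addHaar_closedBall _ _ (by positivity), finrank_euclideanSpace_fin,
          ← hBdef]
    _ = (N + 1 : ℕ) * (ENNReal.ofReal ((2 * δ) ^ n) * B) := by
        rw [Finset.sum_const, Finset.card_range, nsmul_eq_mul]
    _ ≤ ENNReal.ofReal (2 * M / δ + 2) * (ENNReal.ofReal ((2 * δ) ^ n) * B) := by
        apply mul_le_mul_left
        rw [← ENNReal.ofReal_natCast]
        apply ENNReal.ofReal_le_ofReal
        push_cast
        have := Nat.ceil_lt_add_one hM2δ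
        rw [hNdef]
        push_cast
        linarith
    _ = ENNReal.ofReal ((2 * M / δ + 2) * ((2 * δ) ^ n)) * B := by
        rw [ENNReal.ofReal_mul (by positivity), mul_assoc]
    _ ≤ ENNReal.ofReal (16 * 2 ^ n * δ ^ (n - 1) * θ / α) * B := by
        exact mul_le_mul_left (ENNReal.ofReal_le_ofReal hreal) _
    _ = ENNReal.ofReal (2 ^ n * 16 * B.toReal * δ ^ (n - 1) * θ / α) := by
        conv_lhs => rw [← ENNReal.ofReal_toReal hBtop]
        rw [← ENNReal.ofReal_mul (by positivity)]
        congr 1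
        ring
end
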